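/- With u_∞, s, N, p, α as above (N+2s < α < (p/2)(N+2s)), there exists C > 0 such that for all y, z with |y−z| ≥ (2/3)R ≥ 2/3 and |y|,|z| ≥ R: ∫_{ℝ^N} u_∞(x−y)^{p/2} u_∞(x−z)^{p/2} dx ≤ C R^{N+2s−α} A_{y,z}. -/

import Mathlib

open Real MeasureTheory

lemma aux_one_add_rpow {t m : ℝ} (ht : 0 ≤ t) (hm : 0 ≤ m) :
    (1 + t) ^ m ≤ 2 ^ m * (1 + t ^ m) := by
  have h1 : (1 + t) ≤ 2 * max 1 t := by
    rcases le_total t 1 with h | h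
    · simp [max_eq_left h]; linarith
    · simp [max_eq_right h]; linarith
  have h2 : (1 + t) ^ m ≤ (2 * max 1 t) ^ m :=
    Real.rpow_le_rpow (by linarith) h1 hm
  have h3 : (2 * max 1 t) ^ m = 2 ^ m * (max 1 t) ^ m :=
    Real.mul_rpow (by norm_num) (le_max_of_le_left zero_le_one)
  have h4 : (max 1 t) ^ m ≤ 1 + t ^ m := by
    rcases le_total t 1 with h | h
    · rw [max_eq_left h, Real.one_rpow]
      have := Real.rpow_nonneg ht m
      linarith
    · rw [max_eq_right h]
      have : (1:ℝ) ≤ t ^ m := Real.one_le_rpow h hm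
      nlinarith [Real.rpow_nonneg ht m]
  calc (1 + t) ^ m ≤ 2 ^ m * (max 1 t) ^ m := by rw [← h3]; exact h2
    _ ≤ 2 ^ m * (1 + t ^ m) := by
        have : (0:ℝ) ≤ 2 ^ m := Real.rpow_nonneg (by norm_num) m
        nlinarith

lemma aux_integrable (N : ℕ) {m q : ℝ} (hm : 1 ≤ m) (hq : 0 < q) (hqm : (N : ℝ) < q * m) :
    Integrable (fun x : EuclideanSpace ℝ (Fin N) => (1 + ‖x‖ ^ m) ^ (-q)) := by
  have hfin : (Module.finrank ℝ (EuclideanSpace ℝ (Fin N)) : ℝ) < q * m := by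
    rw [finrank_euclideanSpace, Fintype.card_fin]; exact hqm
  refine ((integrable_one_add_norm hfin).const_mul ((2:ℝ) ^ (q * m))).mono'
    (Measurable.aestronglyMeasurable (by fun_prop)) (Filter.Eventually.of_forall fun x => ?_)
  have hx : (0:ℝ) ≤ ‖x‖ := norm_nonneg x
  have h1 : (0:ℝ) < 1 + ‖x‖ ^ m := by positivity
  rw [Real.norm_of_nonneg (Real.rpow_nonneg h1.le _)]
  have key : 2 ^ (-m) * (1 + ‖x‖) ^ m ≤ 1 + ‖x‖ ^ m := by
    have := aux_one_add_rpow hx (by linarith : (0:ℝ) ≤ m)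
    have h2 : (0:ℝ) < 2 ^ m := Real.rpow_pos_of_pos (by norm_num) m
    rw [Real.rpow_neg (by norm_num)]
    rw [inv_mul_le_iff₀ h2]
    linarith
  have hpos : (0:ℝ) < 2 ^ (-m) * (1 + ‖x‖) ^ m := by positivity
  have h3 : (1 + ‖x‖ ^ m) ^ (-q) ≤ (2 ^ (-m) * (1 + ‖x‖) ^ m) ^ (-q) :=
    Real.rpow_le_rpow_of_nonpos hpos key (by linarith)
  refine h3.trans_eq ?_
  rw [Real.mul_rpow (by positivity) (by positivity), ← Real.rpow_mul (by norm_num : (0:ℝ) ≤ 2),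
    ← Real.rpow_mul (by positivity : (0:ℝ) ≤ 1 + ‖x‖)]
  have e1 : -m * -q = q * m := by ring
  have e2 : m * -q = -(q * m) := by ring
  rw [e1, e2]

set_option maxHeartbeats 4000000 in
theorem stmt13 (N : ℕ) (hN : 1 ≤ N) (s p α C₁ C₂ : ℝ) (hs0 : 0 < s) (hs1 : s < 1)
    (hp : 2 < p) (hC1 : 0 < C₁) (hC12 : C₁ < C₂)
    (hα1 : (N : ℝ) + 2 * s < α) (hα2 : α < (p / 2) * ((N : ℝ) + 2 * s))
    (u : EuclideanSpace ℝ (Fin N) → ℝ) (hmeas : Measurable u) (hpos : ∀ x, 0 < u x)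
    (hlow : ∀ x, C₁ / (1 + ‖x‖ ^ ((N : ℝ) + 2 * s)) ≤ u x)
    (hupp : ∀ x, u x ≤ C₂ / (1 + ‖x‖ ^ ((N : ℝ) + 2 * s))) :
    ∃ C > (0 : ℝ), ∀ R : ℝ, 1 ≤ R → ∀ y z : EuclideanSpace ℝ (Fin N),
      R ≤ ‖y‖ → R ≤ ‖z‖ → (2 / 3) * R ≤ ‖y - z‖ →
      (∫ x, u (x - y) ^ (p / 2) * u (x - z) ^ (p / 2))
        ≤ C * R ^ ((N : ℝ) + 2 * s - α) * ∫ x, u (x - y) ^ (p - 1) * u (x - z) := by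
  have hN1 : (1:ℝ) ≤ (N:ℝ) := by exact_mod_cast hN
  set m : ℝ := (N : ℝ) + 2 * s with hm_def
  set q : ℝ := p / 2 with hq_def
  have hm1 : 1 ≤ m := by rw [hm_def]; linarith
  have hm0 : 0 ≤ m := by linarith
  have hNm : (N : ℝ) < m := by rw [hm_def]; linarith
  have hq1 : (1:ℝ) < q := by rw [hq_def]; linarith
  have hq0 : (0:ℝ) < q := by linarith
  have hmα : m < α := hα1
  have hαqm : α < q * m := hα2
  have hqm : (N:ℝ) < q * m := by linarith
  have hC2 : (0:ℝ) < C₂ := lt_trans hC1 hC12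
  -- the comparison kernel
  set g : EuclideanSpace ℝ (Fin N) → ℝ := fun w => (1 + ‖w‖ ^ m) ^ (-q) with hg_def
  have hg_int : Integrable g := aux_integrable N hm1 hq0 hqm
  have hg_nonneg : ∀ w, 0 ≤ g w := fun w => Real.rpow_nonneg (by positivity) _
  set I : ℝ := ∫ x, g x with hI_def
  have hI0 : 0 ≤ I := integral_nonneg hg_nonneg
  have hh_int : Integrable (fun w : EuclideanSpace ℝ (Fin N) => (1 + ‖w‖ ^ m) ^ (-(1:ℝ))) :=
    aux_integrable N hm1 one_pos (by simpa using hNm)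
  -- basic bounds on u
  have huC : ∀ w, u w ≤ C₂ := by
    intro w
    refine (hupp w).trans ?_
    have h1 : (1:ℝ) ≤ 1 + ‖w‖ ^ m := by
      have := Real.rpow_nonneg (norm_nonneg w) m; linarith
    calc C₂ / (1 + ‖w‖ ^ m) ≤ C₂ / 1 := by gcongr
      _ = C₂ := by ring
  have hu1 : ∀ w, u w ≤ C₂ * (1 + ‖w‖ ^ m) ^ (-(1:ℝ)) := by
    intro w
    have h1 : (0:ℝ) < 1 + ‖w‖ ^ m := by positivity
    rw [Real.rpow_neg_one]
    calc u w ≤ C₂ / (1 + ‖w‖ ^ m) := hupp w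
      _ = C₂ * (1 + ‖w‖ ^ m)⁻¹ := by ring
  have huq : ∀ w, u w ^ q ≤ C₂ ^ q * g w := by
    intro w
    have h1 : (0:ℝ) < 1 + ‖w‖ ^ m := by positivity
    have h2 : u w ^ q ≤ (C₂ / (1 + ‖w‖ ^ m)) ^ q :=
      Real.rpow_le_rpow (hpos w).le (hupp w) hq0.le
    refine h2.trans_eq ?_
    show (C₂ / (1 + ‖w‖ ^ m)) ^ q = C₂ ^ q * (1 + ‖w‖ ^ m) ^ (-q)
    rw [Real.div_rpow hC2.le h1.le, Real.rpow_neg h1.le, div_eq_mul_inv]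
  -- volume constant
  set V : ℝ := (volume (Metric.ball (0 : EuclideanSpace ℝ (Fin N)) 1)).toReal with hV_def
  have hV0 : 0 < V :=
    ENNReal.toReal_pos (Metric.measure_ball_pos volume 0 one_pos).ne' measure_ball_lt_top.ne
  -- constants
  set ζ : ℝ := (C₁/2) ^ (p-1) * (C₁ / (2 * (5/2 : ℝ) ^ m)) * V with hζ_def
  have hζ0 : 0 < ζ := by positivity
  set K : ℝ := C₂ ^ (2*q) * 2 ^ (q*m) * (2 * I) with hK_def
  have hK0 : 0 ≤ K := by positivity
  set K' : ℝ := K * (2/3 : ℝ) ^ (α - q*m) with hK'_def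
  have hK'0 : 0 ≤ K' := by positivity
  refine ⟨K' / ζ * (3/2 : ℝ) ^ (α - m) + 1,
    add_pos_of_nonneg_of_pos
      (mul_nonneg (div_nonneg hK'0 hζ0.le) (Real.rpow_nonneg (by norm_num) _)) one_pos, ?_⟩
  intro R hR y z hy hz hyz
  set d : ℝ := ‖y - z‖ with hd_def
  have hd23 : (2:ℝ)/3 ≤ d := le_trans (by linarith) hyz
  have hd0 : (0:ℝ) < d := by linarith
  have hR0 : (0:ℝ) < R := by linarith
  -- integrability of both integrands
  have hmeasA : Measurable fun x : EuclideanSpace ℝ (Fin N) =>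
      u (x - y) ^ (p - 1) * u (x - z) := by fun_prop
  have hAint : Integrable (fun x : EuclideanSpace ℝ (Fin N) =>
      u (x - y) ^ (p - 1) * u (x - z)) := by
    refine ((hh_int.comp_sub_right z).const_mul (C₂ ^ (p-1) * C₂)).mono'
      hmeasA.aestronglyMeasurable (Filter.Eventually.of_forall fun x => ?_)
    have h1 : (0:ℝ) ≤ u (x - y) ^ (p - 1) * u (x - z) := by
      have := (hpos (x - y)).le; have := (hpos (x - z)).le; positivity
    rw [Real.norm_of_nonneg h1]
    have h2 : u (x - y) ^ (p - 1) ≤ C₂ ^ (p - 1) :=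
      Real.rpow_le_rpow (hpos _).le (huC _) (by linarith)
    have h3 : u (x - z) ≤ C₂ * (1 + ‖x - z‖ ^ m) ^ (-(1:ℝ)) := hu1 _
    have h4 : (0:ℝ) ≤ (1 + ‖x - z‖ ^ m) ^ (-(1:ℝ)) := Real.rpow_nonneg (by positivity) _
    calc u (x - y) ^ (p - 1) * u (x - z)
        ≤ C₂ ^ (p - 1) * (C₂ * (1 + ‖x - z‖ ^ m) ^ (-(1:ℝ))) := by
          apply mul_le_mul h2 h3 (hpos _).le (by positivity)
      _ = C₂ ^ (p-1) * C₂ * (1 + ‖x - z‖ ^ m) ^ (-(1:ℝ)) := by ring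
  have hmeasL : Measurable fun x : EuclideanSpace ℝ (Fin N) =>
      u (x - y) ^ q * u (x - z) ^ q := by fun_prop
  have hLint : Integrable (fun x : EuclideanSpace ℝ (Fin N) =>
      u (x - y) ^ q * u (x - z) ^ q) := by
    refine ((hg_int.comp_sub_right z).const_mul (C₂ ^ q * C₂ ^ q)).mono'
      hmeasL.aestronglyMeasurable (Filter.Eventually.of_forall fun x => ?_)
    have h1 : (0:ℝ) ≤ u (x - y) ^ q * u (x - z) ^ q := by
      have := (hpos (x - y)).le; have := (hpos (x - z)).le; positivity
    rw [Real.norm_of_nonneg h1]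
    have h2 : u (x - y) ^ q ≤ C₂ ^ q := Real.rpow_le_rpow (hpos _).le (huC _) hq0.le
    have h3 : u (x - z) ^ q ≤ C₂ ^ q * g (x - z) := huq _
    calc u (x - y) ^ q * u (x - z) ^ q
        ≤ C₂ ^ q * (C₂ ^ q * g (x - z)) := by
          apply mul_le_mul h2 h3 (Real.rpow_nonneg (hpos _).le _) (by positivity)
      _ = C₂ ^ q * C₂ ^ q * g (x - z) := by ring
  have hA0 : 0 ≤ ∫ x, u (x - y) ^ (p - 1) * u (x - z) := by
    apply integral_nonneg
    intro x
    have := (hpos (x - y)).le; have := (hpos (x - z)).le; positivity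
  -- Lower bound for A
  have hA_low : ζ * d ^ (-m) ≤ ∫ x, u (x - y) ^ (p - 1) * u (x - z) := by
    set c₀ : ℝ := (C₁/2) ^ (p-1) * (C₁ / (2 * (5/2 : ℝ) ^ m) * d ^ (-m)) with hc₀_def
    have hsub : ∀ x ∈ Metric.ball y 1, c₀ ≤ u (x - y) ^ (p - 1) * u (x - z) := by
      intro x hx
      have hxy : ‖x - y‖ < 1 := by
        rwa [Metric.mem_ball, dist_eq_norm] at hx
      have h1 : u (x - y) ^ (p - 1) ≥ (C₁/2) ^ (p-1) := by
        have hb : 1 + ‖x - y‖ ^ m ≤ 2 := by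
          have := Real.rpow_le_one (norm_nonneg _) hxy.le hm0
          linarith
        have : C₁ / 2 ≤ C₁ / (1 + ‖x - y‖ ^ m) := by
          rw [div_le_div_iff₀ (by norm_num) (by positivity)]
          nlinarith [hC1.le]
        exact Real.rpow_le_rpow (by positivity) (this.trans (hlow _)) (by linarith)
      have h2 : C₁ / (2 * (5/2 : ℝ) ^ m) * d ^ (-m) ≤ u (x - z) := by
        have htri : ‖x - z‖ ≤ 1 + d := by
          have e : x - z = (x - y) + (y - z) := by abel
          calc ‖x - z‖ = ‖(x - y) + (y - z)‖ := by rw [← e]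
            _ ≤ ‖x - y‖ + ‖y - z‖ := norm_add_le _ _
            _ ≤ 1 + d := by rw [← hd_def]; linarith
        have h52 : (1:ℝ) + d ≤ 5/2 * d := by linarith
        have hup : ‖x - z‖ ^ m ≤ (5/2 : ℝ) ^ m * d ^ m := by
          calc ‖x - z‖ ^ m ≤ (5/2 * d) ^ m :=
                Real.rpow_le_rpow (norm_nonneg _) (htri.trans h52) hm0
            _ = (5/2 : ℝ) ^ m * d ^ m := Real.mul_rpow (by norm_num) hd0.le
        have hone : (1:ℝ) ≤ (5/2 : ℝ) ^ m * d ^ m := by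
          have : (1:ℝ) ≤ (5/2 * d) ^ m := Real.one_le_rpow (by linarith) hm0
          rwa [Real.mul_rpow (by norm_num) hd0.le] at this
        have hb : 1 + ‖x - z‖ ^ m ≤ 2 * ((5/2 : ℝ) ^ m * d ^ m) := by linarith
        have hlb : C₁ / (2 * ((5/2 : ℝ) ^ m * d ^ m)) ≤ u (x - z) := by
          refine le_trans ?_ (hlow (x - z))
          rw [div_le_div_iff₀ (by positivity) (by positivity)]
          nlinarith [hC1.le, Real.rpow_nonneg (norm_nonneg (x - z)) m]
        refine le_trans (le_of_eq ?_) hlb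
        rw [Real.rpow_neg hd0.le]
        have hdm : (0:ℝ) < d ^ m := Real.rpow_pos_of_pos hd0 m
        have h5m : (0:ℝ) < (5/2 : ℝ) ^ m := Real.rpow_pos_of_pos (by norm_num) m
        rw [div_mul_eq_mul_div, div_eq_div_iff (by positivity) (by positivity)]
        field_simp
      calc c₀ = (C₁/2) ^ (p-1) * (C₁ / (2 * (5/2 : ℝ) ^ m) * d ^ (-m)) := hc₀_def
        _ ≤ u (x - y) ^ (p - 1) * u (x - z) := by
            apply mul_le_mul h1 h2 (by positivity) (Real.rpow_nonneg (hpos _).le _)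
    have hball : (volume (Metric.ball y 1)).toReal = V := by
      rw [hV_def, Measure.addHaar_ball_center volume y 1]
    have hstep : c₀ * V ≤ ∫ x in Metric.ball y 1, u (x - y) ^ (p - 1) * u (x - z) := by
      rw [← hball]
      exact setIntegral_ge_of_const_le_real measurableSet_ball measure_ball_lt_top.ne
        hsub hAint.integrableOn
    have hstep2 : (∫ x in Metric.ball y 1, u (x - y) ^ (p - 1) * u (x - z))
        ≤ ∫ x, u (x - y) ^ (p - 1) * u (x - z) := by
      apply setIntegral_le_integral hAint
      apply Filter.Eventually.of_forall
      intro x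
      have := (hpos (x - y)).le; have := (hpos (x - z)).le; positivity
    calc ζ * d ^ (-m) = c₀ * V := by rw [hζ_def, hc₀_def]; ring
      _ ≤ _ := hstep.trans hstep2
  -- Upper bound for LHS
  have hL_up : (∫ x, u (x - y) ^ q * u (x - z) ^ q) ≤ K * d ^ (-(q*m)) := by
    set c₁ : ℝ := C₂ ^ (2*q) * (2 ^ (q*m) * d ^ (-(q*m))) with hc₁_def
    have hcoeff : (0:ℝ) ≤ 2 ^ (q*m) * d ^ (-(q*m)) := by positivity
    have hkey : ∀ w : EuclideanSpace ℝ (Fin N), d/2 ≤ ‖w‖ →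
        g w ≤ 2 ^ (q*m) * d ^ (-(q*m)) := by
      intro w hw
      have hd2 : (0:ℝ) < (d/2) ^ m := Real.rpow_pos_of_pos (by linarith) m
      have h1 : (d/2) ^ m ≤ 1 + ‖w‖ ^ m := by
        have := Real.rpow_le_rpow (by linarith : (0:ℝ) ≤ d/2) hw hm0
        linarith
      have h2 : g w ≤ ((d/2) ^ m) ^ (-q) :=
        Real.rpow_le_rpow_of_nonpos hd2 h1 (by linarith)
      refine h2.trans_eq ?_
      rw [← Real.rpow_mul (by linarith : (0:ℝ) ≤ d/2)]
      have e1 : m * -q = -(q*m) := by ring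
      rw [e1, Real.div_rpow hd0.le (by norm_num : (0:ℝ) ≤ 2), div_eq_mul_inv,
        ← Real.rpow_neg (by norm_num : (0:ℝ) ≤ 2), neg_neg]
      ring
    have hsplit : ∀ x, g (x - y) * g (x - z)
        ≤ 2 ^ (q*m) * d ^ (-(q*m)) * (g (x - y) + g (x - z)) := by
      intro x
      have htri : d ≤ ‖x - y‖ + ‖x - z‖ := by
        have e : y - z = -(x - y) + (x - z) := by abel
        calc d = ‖-(x - y) + (x - z)‖ := by rw [hd_def, e]
          _ ≤ ‖-(x - y)‖ + ‖x - z‖ := norm_add_le _ _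
          _ = ‖x - y‖ + ‖x - z‖ := by rw [norm_neg]
      rcases le_total ‖x - y‖ ‖x - z‖ with h | h
      · have hkz := hkey (x - z) (by linarith)
        have h2 : g (x - y) * g (x - z) ≤ 2 ^ (q*m) * d ^ (-(q*m)) * g (x - y) := by
          calc g (x - y) * g (x - z) ≤ g (x - y) * (2 ^ (q*m) * d ^ (-(q*m))) :=
                mul_le_mul_of_nonneg_left hkz (hg_nonneg _)
            _ = _ := by ring
        nlinarith [hg_nonneg (x - z), mul_nonneg hcoeff (hg_nonneg (x - z))]
      · have hky := hkey (x - y) (by linarith)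
        have h2 : g (x - y) * g (x - z) ≤ 2 ^ (q*m) * d ^ (-(q*m)) * g (x - z) := by
          calc g (x - y) * g (x - z) ≤ (2 ^ (q*m) * d ^ (-(q*m))) * g (x - z) :=
                mul_le_mul_of_nonneg_right hky (hg_nonneg _)
            _ = _ := by ring
        nlinarith [hg_nonneg (x - y), mul_nonneg hcoeff (hg_nonneg (x - y))]
    have hC2q : C₂ ^ (2*q) = C₂ ^ q * C₂ ^ q := by
      rw [← Real.rpow_add hC2]; congr 1; ring
    have hpt : ∀ x, u (x - y) ^ q * u (x - z) ^ q
        ≤ c₁ * (g (x - y) + g (x - z)) := by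
      intro x
      have h1 : u (x - y) ^ q * u (x - z) ^ q ≤ (C₂ ^ q * g (x - y)) * (C₂ ^ q * g (x - z)) := by
        apply mul_le_mul (huq _) (huq _) (Real.rpow_nonneg (hpos _).le _) (by positivity)
      calc u (x - y) ^ q * u (x - z) ^ q
          ≤ (C₂ ^ q * g (x - y)) * (C₂ ^ q * g (x - z)) := h1
        _ = C₂ ^ (2*q) * (g (x - y) * g (x - z)) := by rw [hC2q]; ring
        _ ≤ C₂ ^ (2*q) * (2 ^ (q*m) * d ^ (-(q*m)) * (g (x - y) + g (x - z))) :=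
            mul_le_mul_of_nonneg_left (hsplit x) (by positivity)
        _ = c₁ * (g (x - y) + g (x - z)) := by rw [hc₁_def]; ring
    have hrint : Integrable (fun x : EuclideanSpace ℝ (Fin N) =>
        c₁ * (g (x - y) + g (x - z))) :=
      (((hg_int.comp_sub_right y)).add (hg_int.comp_sub_right z)).const_mul c₁
    have hmono := integral_mono hLint hrint hpt
    refine hmono.trans ?_
    rw [integral_const_mul, integral_add (hg_int.comp_sub_right y) (hg_int.comp_sub_right z),
      integral_sub_right_eq_self g y, integral_sub_right_eq_self g z]
    rw [hK_def, hc₁_def, ← hI_def]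
    exact le_of_eq (by ring)
  -- assembly
  have hstep1 : (∫ x, u (x - y) ^ q * u (x - z) ^ q) ≤ K' * d ^ (-α) := by
    have e1 : d ^ (-(q*m)) = d ^ (-α) * d ^ (α - q*m) := by
      rw [← Real.rpow_add hd0]; congr 1; ring
    have e2 : d ^ (α - q*m) ≤ (2/3 : ℝ) ^ (α - q*m) :=
      Real.rpow_le_rpow_of_nonpos (by norm_num) hd23 (by linarith)
    calc (∫ x, u (x - y) ^ q * u (x - z) ^ q) ≤ K * d ^ (-(q*m)) := hL_up
      _ = K * d ^ (-α) * d ^ (α - q*m) := by rw [e1]; ring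
      _ ≤ K * d ^ (-α) * (2/3 : ℝ) ^ (α - q*m) := by
          apply mul_le_mul_of_nonneg_left e2
          exact mul_nonneg hK0 (Real.rpow_nonneg hd0.le _)
      _ = K' * d ^ (-α) := by rw [hK'_def]; ring
  have hstep2 : (3/2 : ℝ) ^ (m - α) * (ζ * d ^ (-α))
      ≤ R ^ (m - α) * ∫ x, u (x - y) ^ (p - 1) * u (x - z) := by
    have hRle : R ≤ 3/2 * d := by linarith
    have h1 : (3/2 * d) ^ (m - α) ≤ R ^ (m - α) :=
      Real.rpow_le_rpow_of_nonpos hR0 hRle (by linarith)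
    have h2 : (3/2 * d) ^ (m - α) = (3/2 : ℝ) ^ (m - α) * d ^ (m - α) :=
      Real.mul_rpow (by norm_num) hd0.le
    have h3 : d ^ (m - α) * d ^ (-m) = d ^ (-α) := by
      rw [← Real.rpow_add hd0]; congr 1; ring
    calc (3/2 : ℝ) ^ (m - α) * (ζ * d ^ (-α))
        = ((3/2 : ℝ) ^ (m - α) * d ^ (m - α)) * (ζ * d ^ (-m)) := by
          rw [← h3]; ring
      _ ≤ R ^ (m - α) * ∫ x, u (x - y) ^ (p - 1) * u (x - z) := by
          apply mul_le_mul (h2 ▸ h1) hA_low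
            (mul_nonneg hζ0.le (Real.rpow_nonneg hd0.le _))
            (Real.rpow_nonneg hR0.le _)
  have h32 : (3/2 : ℝ) ^ (α - m) * (3/2 : ℝ) ^ (m - α) = 1 := by
    rw [← Real.rpow_add (by norm_num : (0:ℝ) < 3/2)]
    have : α - m + (m - α) = 0 := by ring
    rw [this, Real.rpow_zero]
  have hRA0 : 0 ≤ R ^ (m - α) * ∫ x, u (x - y) ^ (p - 1) * u (x - z) :=
    mul_nonneg (Real.rpow_nonneg hR0.le _) hA0
  calc (∫ x, u (x - y) ^ q * u (x - z) ^ q) ≤ K' * d ^ (-α) := hstep1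
    _ = (K' / ζ * (3/2 : ℝ) ^ (α - m)) * ((3/2 : ℝ) ^ (m - α) * (ζ * d ^ (-α))) := by
        have e : (K' / ζ * (3/2 : ℝ) ^ (α - m)) * ((3/2 : ℝ) ^ (m - α) * (ζ * d ^ (-α)))
            = K' * d ^ (-α) * ((3/2 : ℝ) ^ (α - m) * (3/2 : ℝ) ^ (m - α)) * (ζ / ζ) := by
          ring
        rw [e, h32, div_self hζ0.ne']
        ring
    _ ≤ (K' / ζ * (3/2 : ℝ) ^ (α - m)) *
        (R ^ (m - α) * ∫ x, u (x - y) ^ (p - 1) * u (x - z)) := by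
        apply mul_le_mul_of_nonneg_left hstep2
          (mul_nonneg (div_nonneg hK'0 hζ0.le) (Real.rpow_nonneg (by norm_num) _))
    _ ≤ (K' / ζ * (3/2 : ℝ) ^ (α - m) + 1) * R ^ (m - α) *
        ∫ x, u (x - y) ^ (p - 1) * u (x - z) := by nlinarith
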